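/- Let A : S^n → R^m be linear with F = {X ⪰ 0 : A(X) = b} nonempty, and let P be the projection of the identity matrix I onto range(A*) in Frobenius norm. If P is positive definite, then F is bounded. -/

import Mathlib

open Matrix

-- trace of product of two real PSD matrices is nonnegative
lemma trace_mul_nonneg' {n : ℕ} {A B : Matrix (Fin n) (Fin n) ℝ}
    (hA : A.PosSemidef) (hB : B.PosSemidef) : 0 ≤ (A * B).trace := by
  obtain ⟨C, rfl⟩ : ∃ C : Matrix (Fin n) (Fin n) ℝ, A = Cᴴ * C := by
    open scoped MatrixOrder in exact CStarAlgebra.nonneg_iff_eq_star_mul_self.mp hA.nonneg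
  rw [Matrix.mul_assoc, Matrix.trace_mul_comm]
  have hP : (C * B * Cᴴ).PosSemidef := hB.mul_mul_conjTranspose_same C
  rw [Matrix.trace]
  refine Finset.sum_nonneg fun i _ => ?_
  have := hP.dotProduct_mulVec_nonneg (Pi.single i 1)
  simpa [dotProduct, Matrix.mulVec, Pi.single_apply, Finset.sum_ite_eq,
    Matrix.diag] using this

-- diag of PSD nonneg
lemma diag_nonneg' {n : ℕ} {X : Matrix (Fin n) (Fin n) ℝ} (hX : X.PosSemidef) (i : Fin n) :
    0 ≤ X i i := by
  have := hX.dotProduct_mulVec_nonneg (Pi.single i 1)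
  simpa [dotProduct, Matrix.mulVec, Pi.single_apply, Finset.sum_ite_eq] using this

lemma abs_entry_le_trace' {n : ℕ} {X : Matrix (Fin n) (Fin n) ℝ} (hX : X.PosSemidef)
    (i j : Fin n) : |X i j| ≤ X.trace := by
  have hdiag := diag_nonneg' hX
  have htrace : ∀ k, X k k ≤ X.trace := fun k =>
    Finset.single_le_sum (f := fun k => X k k) (fun l _ => hdiag l) (Finset.mem_univ k)
  rcases eq_or_ne i j with rfl | hij
  · rw [abs_of_nonneg (hdiag i)]; exact htrace i
  · have htr : X i i + X j j ≤ X.trace := by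
      have h1 : ∑ k ∈ ({i, j} : Finset (Fin n)), X k k ≤ ∑ k, X k k :=
        Finset.sum_le_sum_of_subset_of_nonneg (Finset.subset_univ _)
          (fun k _ _ => hdiag k)
      rwa [Finset.sum_pair hij] at h1
    have hsym : X j i = X i j := by
      have := congrFun (congrFun hX.1.symm j) i
      simpa using this
    have h1 := hX.dotProduct_mulVec_nonneg (Pi.single i 1 + Pi.single j 1)
    have h2 := hX.dotProduct_mulVec_nonneg (Pi.single i 1 - Pi.single j 1)
    simp [dotProduct, Matrix.mulVec, Pi.single_apply, mul_add, add_mul,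
      mul_sub, sub_mul, Finset.sum_add_distrib, Finset.sum_sub_distrib,
      Finset.sum_ite_eq, hij] at h1 h2
    rw [abs_le]
    constructor <;> nlinarith [hdiag i, hdiag j]

lemma exists_smul_one_le {n : ℕ} {P : Matrix (Fin n) (Fin n) ℝ} (hn : 0 < n)
    (hP : P.PosDef) : ∃ ε : ℝ, 0 < ε ∧ (P - ε • 1).PosSemidef := by
  haveI : Nonempty (Fin n) := ⟨⟨0, hn⟩⟩
  have hH := hP.1
  set ev := hH.eigenvalues with hev
  set U : Matrix (Fin n) (Fin n) ℝ := (hH.eigenvectorUnitary : Matrix (Fin n) (Fin n) ℝ)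
  refine ⟨Finset.univ.inf' Finset.univ_nonempty ev, ?_, ?_⟩
  · obtain ⟨k, -, hk⟩ := Finset.exists_mem_eq_inf' Finset.univ_nonempty ev
    rw [hk]; exact hP.eigenvalues_pos k
  · set ε := Finset.univ.inf' Finset.univ_nonempty ev
    have hUU : U * star U = 1 := (Matrix.mem_unitaryGroup_iff).mp hH.eigenvectorUnitary.2
    have key : P - ε • 1 = U * Matrix.diagonal (fun i => ev i - ε) * star U := by
      have hspec := hH.spectral_theorem
      have : Matrix.diagonal (fun i => ev i - ε) =
          Matrix.diagonal ev - Matrix.diagonal (fun _ => ε) := by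
        rw [← Matrix.diagonal_sub]
      rw [this, Matrix.mul_sub, Matrix.sub_mul]
      have h2 : U * Matrix.diagonal (fun _ : Fin n => ε) * star U = ε • 1 := by
        have : Matrix.diagonal (fun _ : Fin n => ε) = ε • (1 : Matrix (Fin n) (Fin n) ℝ) := by
          rw [Matrix.smul_one_eq_diagonal]
        rw [this, Matrix.mul_smul, Matrix.smul_mul, Matrix.mul_one, hUU]
      rw [h2]
      have h3 : U * Matrix.diagonal ev * star U = P := by
        rw [show Matrix.diagonal ev = Matrix.diagonal (RCLike.ofReal ∘ ev) from by
          simp [Function.comp, RCLike.ofReal]]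
        exact hspec.symm
      rw [h3]
    rw [key]
    exact (Matrix.posSemidef_diagonal_iff.mpr fun i =>
      sub_nonneg.mpr (Finset.inf'_le ev (Finset.mem_univ i))).mul_mul_conjTranspose_same U

theorem stmt17 {n m : ℕ} (S : Fin m → Matrix (Fin n) (Fin n) ℝ)
    (hS : ∀ i, (S i).IsSymm) (b : Fin m → ℝ)
    (F : Set (Matrix (Fin n) (Fin n) ℝ))
    (hF : F = {X | X.PosSemidef ∧ ∀ i, (S i * X).trace = b i})
    (hne : F.Nonempty)
    (P : Matrix (Fin n) (Fin n) ℝ)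
    (hPrange : ∃ y : Fin m → ℝ, P = ∑ i, y i • S i)
    (hPproj : ∀ Q : Matrix (Fin n) (Fin n) ℝ, (∃ y : Fin m → ℝ, Q = ∑ i, y i • S i) →
      ((P - 1)ᵀ * (P - 1)).trace ≤ ((Q - 1)ᵀ * (Q - 1)).trace)
    (hPpd : P.PosDef) :
    ∃ M : ℝ, ∀ X ∈ F, ∀ i j, |X i j| ≤ M := by
  rcases Nat.eq_zero_or_pos n with rfl | hn
  · exact ⟨0, fun X _ i => i.elim0⟩
  obtain ⟨y, hy⟩ := hPrange
  obtain ⟨ε, hε, hPeps⟩ := exists_smul_one_le hn hPpd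
  set c : ℝ := ∑ i, y i * b i
  refine ⟨c / ε, fun X hX i j => ?_⟩
  rw [hF] at hX
  obtain ⟨hXpsd, hXtr⟩ := hX
  -- trace (P * X) = c
  have htrPX : (P * X).trace = c := by
    rw [hy, Finset.sum_mul, Matrix.trace_sum]
    exact Finset.sum_congr rfl fun k _ => by
      rw [Matrix.smul_mul, Matrix.trace_smul, hXtr k, smul_eq_mul]
  -- ε * trace X ≤ trace (P * X)
  have h1 : 0 ≤ ((P - ε • 1) * X).trace := trace_mul_nonneg' hPeps hXpsd
  have h2 : ((P - ε • 1) * X).trace = (P * X).trace - ε * X.trace := by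
    rw [Matrix.sub_mul, Matrix.trace_sub, Matrix.smul_mul, Matrix.trace_smul,
      Matrix.one_mul, smul_eq_mul]
  have htrX : X.trace ≤ c / ε := by
    rw [h2, htrPX] at h1
    rw [le_div_iff₀ hε]
    linarith
  exact (abs_entry_le_trace' hXpsd i j).trans htrX
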